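/- The 2-valued function f : ℂ → A_2(ℂ) given by f(z) = δ_{z^{3/2}} + δ_{−z^{3/2}} (where z^{3/2} denotes either branch; the multiset is well-defined) is continuous, but there is no neighborhood U of 0 on which f admits a decomposition f = δ_{g₁} + δ_{g₂} with g₁, g₂ : U → ℂ continuous. -/

import Mathlib

open Metric MeasureTheory Set Filter Topology ENNReal NNReal

/-- The Wasserstein-type metric on (representatives of) unordered `Q`-tuples of points of `M`:
`G(a, b) = min over permutations σ of sqrt (∑ d(aᵢ, b_{σ i})²)`. -/
noncomputable def QDist {M : Type*} [MetricSpace M] {Q : ℕ} (a b : Fin Q → M) : ℝ :=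
  ⨅ σ : Equiv.Perm (Fin Q), Real.sqrt (∑ i, dist (a i) (b (σ i)) ^ 2)

/-- The two-valued function `z ↦ δ_{z^{3/2}} + δ_{−z^{3/2}}` (principal branch; the unordered
pair does not depend on the branch). -/
noncomputable def ftv (z : ℂ) : Fin 2 → ℂ := ![z ^ ((3 : ℂ) / 2), -(z ^ ((3 : ℂ) / 2))]

lemma sq_branch (z : ℂ) : (z ^ ((3:ℂ)/2)) ^ 2 = z ^ 3 := by
  rcases eq_or_ne z 0 with h | h
  · rw [h, Complex.zero_cpow (by norm_num : (3:ℂ)/2 ≠ 0)]; ring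
  · rw [sq, ← Complex.cpow_add _ _ h]; norm_num

lemma qdist_bound (z z₀ : ℂ) :
    QDist (ftv z) (ftv z₀) ≤ Real.sqrt (2 * ‖z^3 - z₀^3‖) := by
  set a := z ^ ((3:ℂ)/2) with ha
  set b := z₀ ^ ((3:ℂ)/2) with hb
  have hQ0 : 0 ≤ QDist (ftv z) (ftv z₀) := Real.iInf_nonneg fun σ => Real.sqrt_nonneg _
  have h1 : QDist (ftv z) (ftv z₀) ≤ Real.sqrt 2 * ‖a - b‖ := by
    have := ciInf_le (Finite.bddBelow_range _)
      (1 : Equiv.Perm (Fin 2)) (f := fun σ : Equiv.Perm (Fin 2) =>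
        Real.sqrt (∑ i, dist (ftv z i) (ftv z₀ (σ i)) ^ 2))
    refine le_trans this (le_of_eq ?_)
    simp only [Fin.sum_univ_two, Equiv.Perm.one_apply, ftv, Matrix.cons_val_zero,
      Matrix.cons_val_one, Matrix.head_cons, dist_neg_neg]
    rw [show dist a b ^2 + dist a b ^2 = 2 * dist a b ^2 by ring,
      Real.sqrt_mul (by norm_num), Real.sqrt_sq dist_nonneg, Complex.dist_eq]
  have h2 : QDist (ftv z) (ftv z₀) ≤ Real.sqrt 2 * ‖a + b‖ := by
    have := ciInf_le (Finite.bddBelow_range _)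
      (Equiv.swap 0 1 : Equiv.Perm (Fin 2)) (f := fun σ : Equiv.Perm (Fin 2) =>
        Real.sqrt (∑ i, dist (ftv z i) (ftv z₀ (σ i)) ^ 2))
    refine le_trans this (le_of_eq ?_)
    simp only [Fin.sum_univ_two, Equiv.swap_apply_left, Equiv.swap_apply_right, ftv,
      Matrix.cons_val_zero, Matrix.cons_val_one, Matrix.head_cons]
    have e1 : dist a (-b) = ‖a + b‖ := by rw [Complex.dist_eq]; ring_nf
    have e2 : dist (-a) b = ‖a + b‖ := by
      rw [Complex.dist_eq, ← norm_neg]; ring_nf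
    rw [e1, e2, show ‖a+b‖ ^2 + ‖a+b‖ ^2 = 2 * ‖a+b‖ ^2 by ring,
      Real.sqrt_mul (by norm_num), Real.sqrt_sq (norm_nonneg _)]
  rw [Real.le_sqrt hQ0]
  calc QDist (ftv z) (ftv z₀) ^ 2
      ≤ (Real.sqrt 2 * ‖a - b‖) * (Real.sqrt 2 * ‖a + b‖) := by
        rw [sq]; exact mul_le_mul h1 h2 hQ0 (by positivity)
    _ = 2 * ‖z^3 - z₀^3‖ := by
        rw [show z^3 - z₀^3 = (a-b)*(a+b) by rw [← sq_branch z, ← sq_branch z₀]; ring,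
          norm_mul]
        rw [show (Real.sqrt 2 * ‖a - b‖) * (Real.sqrt 2 * ‖a + b‖)
          = (Real.sqrt 2 * Real.sqrt 2) * (‖a-b‖ * ‖a+b‖) by ring,
          Real.mul_self_sqrt (by norm_num)]
  positivity

/-- the 2-valued function `z ↦ δ_{z^{3/2}} + δ_{−z^{3/2}}` is continuous (as a
map to `A_2(ℂ)` with the Wasserstein metric), but on no neighborhood `U` of `0` does it admit
a decomposition into two continuous single-valued branches `g₁, g₂ : U → ℂ`. -/
theorem stmt19 :
    (∀ z₀ : ℂ, Filter.Tendsto (fun z => QDist (ftv z) (ftv z₀)) (nhds z₀) (nhds 0)) ∧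
    ¬ ∃ U ∈ nhds (0 : ℂ), ∃ g₁ g₂ : ℂ → ℂ, ContinuousOn g₁ U ∧ ContinuousOn g₂ U ∧
      ∀ z ∈ U, (g₁ z = ftv z 0 ∧ g₂ z = ftv z 1) ∨ (g₁ z = ftv z 1 ∧ g₂ z = ftv z 0) := by
  constructor
  · -- continuity
    intro z₀
    have hnn : ∀ z : ℂ, 0 ≤ QDist (ftv z) (ftv z₀) :=
      fun z => Real.iInf_nonneg fun σ => Real.sqrt_nonneg _
    refine squeeze_zero hnn (fun z => qdist_bound z z₀) ?_
    have hcont : Continuous fun z : ℂ => Real.sqrt (2 * ‖z^3 - z₀^3‖) := by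
      apply Real.continuous_sqrt.comp
      exact continuous_const.mul (continuous_norm.comp (by continuity))
    have := hcont.tendsto z₀
    simpa using this
  · -- no continuous selection near 0
    rintro ⟨U, hU, g₁, g₂, hg₁, hg₂, hsel⟩
    obtain ⟨r, hr, hball⟩ := Metric.nhds_basis_closedBall.mem_iff.mp hU
    have hcirc : ∀ t : ℝ, (r : ℂ) * Complex.exp (Complex.I * t) ∈ U := by
      intro t
      apply hball
      simp only [Metric.mem_closedBall, dist_zero_right, norm_mul, Complex.norm_real,
        Real.norm_eq_abs, abs_of_pos hr]
      rw [Complex.norm_exp]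
      simp [Complex.mul_re, Complex.I_re, Complex.I_im]
    have hsq : ∀ z ∈ U, g₁ z ^ 2 = z ^ 3 := by
      intro z hz
      rcases hsel z hz with ⟨h, _⟩ | ⟨h, _⟩ <;>
        simp only [ftv, Matrix.cons_val_zero, Matrix.cons_val_one, Matrix.head_cons] at h <;>
        rw [h]
      · exact sq_branch z
      · rw [neg_pow]; simp [sq_branch z]
    set u : ℝ → ℂ := fun t => g₁ ((r : ℂ) * Complex.exp (Complex.I * t)) *
        Complex.exp (-(3/2) * Complex.I * t) with hu
    have hucont : Continuous u := by
      apply Continuous.mul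
      · exact hg₁.comp_continuous (by continuity) hcirc
      · continuity
    have husq : ∀ t, u t ^ 2 = (r : ℂ) ^ 3 := by
      intro t
      simp only [hu]
      rw [mul_pow, hsq _ (hcirc t), mul_pow, ← Complex.exp_nat_mul, ← Complex.exp_nat_mul,
        mul_assoc, ← Complex.exp_add,
        show ((3:ℕ) * (Complex.I * t) + (2:ℕ) * (-(3/2) * Complex.I * t) : ℂ) = 0 by
          push_cast; ring,
        Complex.exp_zero, mul_one]
    set s : ℝ := Real.sqrt (r ^ 3) with hs
    have hs0 : 0 < s := Real.sqrt_pos.mpr (by positivity)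
    have hval : ∀ t, u t = (s : ℂ) ∨ u t = -(s : ℂ) := by
      intro t
      have h2 : u t ^ 2 = (s:ℂ) ^ 2 := by
        rw [husq t]
        exact_mod_cast congrArg (Complex.ofReal ·)
          (Real.sq_sqrt (by positivity : (0:ℝ) ≤ r^3)).symm
      have hfac : (u t - s) * (u t + s) = 0 := by linear_combination h2
      rcases mul_eq_zero.mp hfac with h | h
      · exact Or.inl (sub_eq_zero.mp h)
      · exact Or.inr (eq_neg_of_add_eq_zero_left h)
    set w : ℝ → ℝ := fun t => (u t).re with hw
    have hwcont : Continuous w := Complex.continuous_re.comp hucont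
    have hwval : ∀ t, w t = s ∨ w t = -s := by
      intro t
      rcases hval t with h | h <;> [left; right] <;> simp [hw, h]
    have hu0 : u 0 = g₁ r := by simp [hu]
    have hu2π : u (2 * Real.pi) = - g₁ r := by
      simp only [hu]
      rw [show (Complex.I * ((2:ℝ) * Real.pi : ℝ) : ℂ) = 2 * Real.pi * Complex.I by
          push_cast; ring,
        Complex.exp_two_pi_mul_I, mul_one]
      rw [show (-(3/2) * Complex.I * ((2:ℝ) * Real.pi : ℝ) : ℂ)
          = Real.pi * Complex.I + (-2 : ℤ) * (2 * Real.pi * Complex.I) by push_cast; ring,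
        Complex.exp_add, Complex.exp_int_mul_two_pi_mul_I, Complex.exp_pi_mul_I]
      ring
    have hw2π : w (2 * Real.pi) = - w 0 := by simp [hw, hu0, hu2π]
    have h0mem : (0:ℝ) ∈ Set.uIcc (w 0) (w (2*Real.pi)) := by
      rcases hwval 0 with h | h <;> rw [Set.mem_uIcc] <;> rw [hw2π, h] <;>
        [right; left] <;> constructor <;> linarith
    obtain ⟨t, _, ht⟩ := intermediate_value_uIcc (hwcont.continuousOn) h0mem
    rcases hwval t with h | h <;> rw [ht] at h <;> linarith
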